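/- For each p in (0,1) there exist alpha > 0 and K < infinity such that for any fixed ordered pair (x,x') of nearest neighbors in Z^2, the P_p-probability that the partial cluster C_{(x,x')} has at least n sites and contains no protected site is at most K exp(-alpha n). In fact one may take the bound K [1-(1-p)^4]^{n/4}. -/

import Mathlib

open MeasureTheory Filter Set

/-- Sites of the lattice `ℤ²`. -/
abbrev Site : Type := ℤ × ℤ

/-- A configuration of open (`true`, i.e. `1`) and closed (`false`, i.e. `0`) sites. -/
abbrev Config : Type := Site → Bool

/-- Nearest-neighbour adjacency in `ℤ²`. -/
def adj (x y : Site) : Prop := (x.1 - y.1).natAbs + (x.2 - y.2).natAbs = 1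

/-- `*`-adjacency: adjacency in the close-packed lattice `ℤ²_cp`. -/
def adjStar (x y : Site) : Prop :=
  x ≠ y ∧ (x.1 - y.1).natAbs ≤ 1 ∧ (x.2 - y.2).natAbs ≤ 1

/-- The four nearest neighbours of a site. -/
def nbrs (x : Site) : Finset Site :=
  {(x.1 + 1, x.2), (x.1 - 1, x.2), (x.1, x.2 + 1), (x.1, x.2 - 1)}

/-- One step of the bootstrap dynamics: a closed site with at least three open
nearest neighbours becomes open; open sites are stable. -/
def step (ω : Config) : Config := fun x =>
  ω x || decide (3 ≤ ((nbrs x).filter fun y => ω y = true).card)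

/-- The configuration after `n` updates (`evolve ω 0 = ω`). -/
def evolve (ω : Config) : ℕ → Config
  | 0 => ω
  | n + 1 => step (evolve ω n)

/-- The site `x` is open in the final (limiting) configuration `ω̄`. -/
def finalOpen (ω : Config) (x : Site) : Prop := ∃ n, evolve ω n x = true

/-- A closed site `x` is stable iff it stays closed at all times, i.e. it is
closed in the final configuration `ω̄`. -/
def stableClosed (ω : Config) (x : Site) : Prop := ∀ n, evolve ω n x = false

/-- A self-avoiding path (with respect to an adjacency relation `A`) all of whose
sites lie in the set `S`. -/
def IsPathIn (S : Set Site) (A : Site → Site → Prop) (k : ℕ) (π : Fin (k + 1) → Site) : Prop :=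
  Function.Injective π ∧ (∀ i : Fin k, A (π i.castSucc) (π i.succ)) ∧ ∀ i, π i ∈ S

/-- `x` and `y` are joined by a path in `S` for the adjacency relation `A`. -/
def ConnIn (S : Set Site) (A : Site → Site → Prop) (x y : Site) : Prop :=
  ∃ (k : ℕ) (π : Fin (k + 1) → Site),
    π 0 = x ∧ π (Fin.last k) = y ∧ IsPathIn S A k π

/-- The plaquette (unit square of four sites) with lower-left corner `c`. -/
def plaq (c : Site) : Finset Site :=
  {c, (c.1 + 1, c.2), (c.1, c.2 + 1), (c.1 + 1, c.2 + 1)}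

/-- A site is protected if it is closed and belongs to a plaquette of closed sites. -/
def IsProtected (ω : Config) (x : Site) : Prop :=
  ω x = false ∧ ∃ c : Site, x ∈ plaq c ∧ ∀ y ∈ plaq c, ω y = false

/-- The partial cluster `C_{(x,x')}`: sites reachable from `x'` by a self-avoiding
`ℤ²`-path whose first step avoids `x` and whose sites all have the state of `x'`. -/
def partialCluster (ω : Config) (x x' : Site) : Set Site :=
  {y | ∃ (k : ℕ) (π : Fin (k + 1) → Site),
    π 0 = x' ∧ π (Fin.last k) = y ∧ Function.Injective π ∧
    (∀ i : Fin k, adj (π i.castSucc) (π i.succ)) ∧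
    (∀ i, ω (π i) = ω x') ∧ ∀ i : Fin (k + 1), (i : ℕ) = 1 → π i ≠ x}

/-- `μ` is the Bernoulli product measure with density `p` of open sites:
all finite-dimensional marginals are products of Bernoulli(`p`) laws. -/
def IsBernoulli (p : ℝ) (μ : Measure Config) : Prop :=
  ∀ (s : Finset Site) (η : Site → Bool),
    μ {ω : Config | ∀ x ∈ s, ω x = η x} =
      ∏ x ∈ s, ENNReal.ofReal (if η x then p else 1 - p)


-- ===================== auxiliary development =====================
open Classical

noncomputable section PC

def blockCorner (z : Site) : Site := (z.1 - z.1 % 2, z.2 - z.2 % 2)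
def pset (z : Site) : Finset Site := plaq (blockCorner z)

lemma mem_plaq_iff (c w : Site) :
    w ∈ plaq c ↔ ((w.1 = c.1 ∨ w.1 = c.1 + 1) ∧ (w.2 = c.2 ∨ w.2 = c.2 + 1)) := by
  simp only [plaq, Finset.mem_insert, Finset.mem_singleton, Prod.ext_iff]
  constructor
  · rintro (h | h | h | h) <;> simp_all <;> omega
  · rintro ⟨h1 | h1, h2 | h2⟩ <;> simp_all
lemma mem_pset_iff (z w : Site) :
    w ∈ pset z ↔ ((w.1 = z.1 - z.1 % 2 ∨ w.1 = z.1 - z.1 % 2 + 1) ∧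
      (w.2 = z.2 - z.2 % 2 ∨ w.2 = z.2 - z.2 % 2 + 1)) := mem_plaq_iff _ _
lemma mem_pset_self (z : Site) : z ∈ pset z := by
  rw [mem_pset_iff]; omega
lemma pset_eq_of_mem {z w : Site} (h : w ∈ pset z) : pset w = pset z := by
  rw [mem_pset_iff] at h
  have h1 : w.1 - w.1 % 2 = z.1 - z.1 % 2 := by omega
  have h2 : w.2 - w.2 % 2 = z.2 - z.2 % 2 := by omega
  unfold pset blockCorner
  rw [h1, h2]
lemma card_pset (z : Site) : (pset z).card = 4 := by
  set c := blockCorner z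
  show (plaq c).card = 4
  unfold plaq
  rw [Finset.card_insert_of_notMem, Finset.card_insert_of_notMem,
    Finset.card_insert_of_notMem, Finset.card_singleton] <;>
    simp [Prod.ext_iff] <;> omega
lemma mem_nbrs_iff (y z : Site) : z ∈ nbrs y ↔ adj y z := by
  simp only [nbrs, adj, Finset.mem_insert, Finset.mem_singleton, Prod.ext_iff]
  omega

def VPath (ω : Config) (x x' : Site) (R : Set Site) (k : ℕ) (π : Fin (k + 1) → Site) : Prop :=
  π 0 = x' ∧ Function.Injective π ∧ (∀ i : Fin k, adj (π i.castSucc) (π i.succ)) ∧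
  (∀ i, ω (π i) = false) ∧ (∀ i : Fin (k + 1), (i : ℕ) = 1 → π i ≠ x) ∧ ∀ i, π i ∈ R
def locReach (ω : Config) (x x' : Site) (R : Set Site) (y : Site) : Prop :=
  ∃ k π, VPath ω x x' R k π ∧ π (Fin.last k) = y

lemma VPath.mono {ω x x' R R' k π} (h : VPath ω x x' R k π) (hR : R ⊆ R') :
    VPath ω x x' R' k π :=
  ⟨h.1, h.2.1, h.2.2.1, h.2.2.2.1, h.2.2.2.2.1, fun i => hR (h.2.2.2.2.2 i)⟩

lemma locReach_mono {ω x x' R R' y} (h : locReach ω x x' R y) (hR : R ⊆ R') :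
    locReach ω x x' R' y := by
  obtain ⟨k, π, hπ, hl⟩ := h; exact ⟨k, π, hπ.mono hR, hl⟩

lemma locReach_mem_partialCluster {ω : Config} {x x' y : Site} (hx' : ω x' = false)
    (h : locReach ω x x' Set.univ y) : y ∈ partialCluster ω x x' := by
  obtain ⟨k, π, ⟨h0, hinj, hadj, hcl, hx, -⟩, hl⟩ := h
  exact ⟨k, π, h0, hl, hinj, hadj, fun i => by rw [hcl i, hx'], hx⟩

lemma mem_partialCluster_locReach {ω : Config} {x x' y : Site} (hx' : ω x' = false)
    (h : y ∈ partialCluster ω x x') : locReach ω x x' Set.univ y := by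
  obtain ⟨k, π, h0, hl, hinj, hadj, hcl, hx⟩ := h
  exact ⟨k, π, ⟨h0, hinj, hadj, fun i => by rw [hcl i, hx'], hx, fun i => trivial⟩, hl⟩

lemma VPath.trunc {ω x x' R k π} (h : VPath ω x x' R k π) {j : ℕ} (hj : j ≤ k) :
    VPath ω x x' R j (π ∘ Fin.castLE (by omega)) := by
  obtain ⟨h0, hinj, hadj, hcl, hx, hR⟩ := h
  refine ⟨?_, hinj.comp (Fin.castLE_injective _), fun i => ?_, fun i => hcl _, fun i hi => ?_,
    fun i => hR _⟩
  · simpa using h0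
  · have := hadj (Fin.castLE (by omega : j ≤ k) i)
    convert this using 2 <;> simp only [Function.comp_apply] <;> congr 1 <;> apply Fin.ext <;> simp
  · exact hx _ (by simpa using hi)

lemma VPath.snoc {ω : Config} {x x' : Site} {R : Set Site} {k π} (h : VPath ω x x' R k π)
    {z : Site} (hz : adj (π (Fin.last k)) z) (hzR : z ∉ R) (hzc : ω z = false) (hzx : z ≠ x) :
    VPath ω x x' (R ∪ {z}) (k + 1) (Fin.snoc π z) := by
  obtain ⟨h0, hinj, hadj, hcl, hx, hR⟩ := h
  have hzπ : ∀ i, π i ≠ z := fun i hi => hzR (hi ▸ hR i)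
  refine ⟨?_, ?_, fun i => ?_, fun i => ?_, fun i hi => ?_, fun i => ?_⟩
  · rw [show (0 : Fin (k+2)) = Fin.castSucc 0 by rfl, Fin.snoc_castSucc]; exact h0
  · intro a b hab
    rcases Fin.eq_castSucc_or_eq_last a with ⟨a', rfl⟩ | rfl <;>
      rcases Fin.eq_castSucc_or_eq_last b with ⟨b', rfl⟩ | rfl <;>
      simp only [Fin.snoc_castSucc, Fin.snoc_last] at hab
    · rw [hinj hab]
    · exact absurd hab (hzπ a')
    · exact absurd hab.symm (hzπ b')
    · rfl
  · by_cases hik : (i : ℕ) < k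
    · set a' : Fin k := ⟨i, hik⟩ with ha'
      have h1 : i.castSucc = Fin.castSucc (a'.castSucc) := by apply Fin.ext; simp [ha']
      have h2 : i.succ = Fin.castSucc (a'.succ) := by apply Fin.ext; simp [ha']
      rw [h1, h2, Fin.snoc_castSucc, Fin.snoc_castSucc]
      exact hadj a'
    · have hik' : (i : ℕ) = k := by have := i.isLt; omega
      have h1 : i.castSucc = Fin.castSucc (Fin.last k) := by apply Fin.ext; simp [hik']
      have h2 : i.succ = Fin.last (k + 1) := by apply Fin.ext; simp [hik']
      rw [h1, h2, Fin.snoc_castSucc, Fin.snoc_last]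
      exact hz
  · rcases Fin.eq_castSucc_or_eq_last i with ⟨a', rfl⟩ | rfl
    · rw [Fin.snoc_castSucc]; exact hcl _
    · rw [Fin.snoc_last]; exact hzc
  · rcases Fin.eq_castSucc_or_eq_last i with ⟨a', rfl⟩ | rfl
    · rw [Fin.snoc_castSucc]; exact hx _ (by simpa using hi)
    · rw [Fin.snoc_last]; exact hzx
  · rcases Fin.eq_castSucc_or_eq_last i with ⟨a', rfl⟩ | rfl
    · rw [Fin.snoc_castSucc]; exact Or.inl (hR _)
    · rw [Fin.snoc_last]; exact Or.inr rfl

variable (x x' : Site)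
def cands (ω : Config) (R : Finset Site) : Finset Site :=
  (R.biUnion nbrs).filter fun z => z ∉ R ∧ ∃ y ∈ R, adj y z ∧ locReach ω x x' ↑R y
def pick (s : Finset Site) : Site := if h : s.Nonempty then h.choose else (0, 0)
lemma pick_mem {s : Finset Site} (h : s.Nonempty) : pick s ∈ s := by
  rw [pick, dif_pos h]; exact h.choose_spec
def Rev (ω : Config) : ℕ → Finset Site
  | 0 => pset x ∪ pset x'
  | j + 1 =>
      let R := Rev ω j
      if (cands x x' ω R).Nonempty then R ∪ pset (pick (cands x x' ω R)) else R

lemma Rev_mono (ω : Config) (j : ℕ) : Rev x x' ω j ⊆ Rev x x' ω (j + 1) := by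
  show Rev x x' ω j ⊆ (if _ then _ else _)
  split
  · exact Finset.subset_union_left
  · exact Finset.Subset.refl _

lemma Rev_mono_le (ω : Config) {i j : ℕ} (h : i ≤ j) : Rev x x' ω i ⊆ Rev x x' ω j := by
  induction j with
  | zero => simpa [Nat.le_zero.mp h]
  | succ j ih =>
    rcases Nat.lt_succ_iff_lt_or_eq.mp (Nat.lt_succ_of_le h) with h' | rfl
    · exact (ih (by omega)).trans (Rev_mono x x' ω j)
    · exact Finset.Subset.refl _

lemma pset_subset_Rev (ω : Config) (j : ℕ) {z : Site} (hz : z ∈ Rev x x' ω j) :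
    pset z ⊆ Rev x x' ω j := by
  induction j with
  | zero =>
    rcases Finset.mem_union.mp hz with h | h
    · rw [pset_eq_of_mem h]; exact Finset.subset_union_left
    · rw [pset_eq_of_mem h]; exact Finset.subset_union_right
  | succ j ih =>
    by_cases hc : (cands x x' ω (Rev x x' ω j)).Nonempty
    · rw [show Rev x x' ω (j+1) = Rev x x' ω j ∪ pset (pick (cands x x' ω (Rev x x' ω j)))
        from if_pos hc] at hz ⊢
      rcases Finset.mem_union.mp hz with h | h
      · exact (ih h).trans Finset.subset_union_left
      · rw [pset_eq_of_mem h]; exact Finset.subset_union_right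
    · rw [show Rev x x' ω (j+1) = Rev x x' ω j from if_neg hc] at hz ⊢
      exact ih hz

lemma card_Rev (ω : Config) (j : ℕ) : (Rev x x' ω j).card ≤ 8 + 4 * j := by
  induction j with
  | zero =>
    refine (Finset.card_union_le _ _).trans ?_
    rw [card_pset, card_pset]
  | succ j ih =>
    show (if _ then _ else _ : Finset Site).card ≤ _
    split
    · refine (Finset.card_union_le _ _).trans ?_
      rw [card_pset]; omega
    · omega

def box (j : ℕ) : Finset Site :=
  Finset.Icc (x.1 - (3 + 2 * (j:ℤ))) (x.1 + (3 + 2 * (j:ℤ))) ×ˢ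
    Finset.Icc (x.2 - (3 + 2 * (j:ℤ))) (x.2 + (3 + 2 * (j:ℤ)))

lemma mem_box_iff (j : ℕ) (w : Site) :
    w ∈ box x j ↔ (x.1 - (3 + 2*(j:ℤ)) ≤ w.1 ∧ w.1 ≤ x.1 + (3 + 2*(j:ℤ))) ∧
      (x.2 - (3 + 2*(j:ℤ)) ≤ w.2 ∧ w.2 ≤ x.2 + (3 + 2*(j:ℤ))) := by
  simp [box, Finset.mem_product, Finset.mem_Icc]

lemma box_mono {i j : ℕ} (h : i ≤ j) : box x i ⊆ box x j := by
  intro w hw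
  rw [mem_box_iff] at hw ⊢
  have : (i:ℤ) ≤ (j:ℤ) := by exact_mod_cast h
  omega

lemma Rev_subset_box (hxx' : adj x x') (ω : Config) (j : ℕ) : Rev x x' ω j ⊆ box x j := by
  induction j with
  | zero =>
    intro w hw
    rw [mem_box_iff]
    rcases Finset.mem_union.mp hw with h | h <;> rw [mem_pset_iff] at h <;>
      ·  unfold adj at hxx'; omega
  | succ j ih =>
    by_cases hc : (cands x x' ω (Rev x x' ω j)).Nonempty
    · rw [show Rev x x' ω (j+1) = Rev x x' ω j ∪ pset (pick (cands x x' ω (Rev x x' ω j)))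
        from if_pos hc]
      intro w hw
      rcases Finset.mem_union.mp hw with h | h
      · exact box_mono x (by omega) (ih h)
      · have htc := pick_mem hc
        generalize hgen : pick (cands x x' ω (Rev x x' ω j)) = t at htc h
        rw [cands, Finset.mem_filter] at htc
        obtain ⟨y, hy, hadj, -⟩ := htc.2.2
        have hyb := ih hy
        rw [mem_box_iff] at hyb ⊢
        rw [mem_pset_iff] at h
        unfold adj at hadj
        push_cast [Nat.cast_succ] at hyb ⊢
        omega
    · rw [show Rev x x' ω (j+1) = Rev x x' ω j from if_neg hc]
      exact fun w hw => box_mono x (by omega) (ih hw)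

lemma locReach_congr {ω ω' : Config} {R : Finset Site}
    (h : ∀ z ∈ R, ω' z = ω z) {y : Site} :
    locReach ω x x' ↑R y ↔ locReach ω' x x' ↑R y := by
  have key : ∀ (ω ω' : Config), (∀ z ∈ R, ω' z = ω z) →
      locReach ω x x' ↑R y → locReach ω' x x' ↑R y := by
    intro ω ω' h ⟨k, π, ⟨h0, hinj, hadj, hcl, hx, hR⟩, hl⟩
    exact ⟨k, π, ⟨h0, hinj, hadj, fun i => by rw [h _ (hR i), hcl i], hx, hR⟩, hl⟩
  exact ⟨key ω ω' h, key ω' ω (fun z hz => (h z hz).symm)⟩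

lemma cands_congr {ω ω' : Config} {R : Finset Site} (h : ∀ z ∈ R, ω' z = ω z) :
    cands x x' ω R = cands x x' ω' R := by
  unfold cands
  apply Finset.filter_congr
  intro z hz
  constructor
  · rintro ⟨h1, y, hy, h2, h3⟩
    exact ⟨h1, y, hy, h2, (locReach_congr x x' h).mp h3⟩
  · rintro ⟨h1, y, hy, h2, h3⟩
    exact ⟨h1, y, hy, h2, (locReach_congr x x' h).mpr h3⟩

lemma Rev_congr {ω ω' : Config} (j : ℕ) (h : ∀ z ∈ Rev x x' ω j, ω' z = ω z) :
    Rev x x' ω' j = Rev x x' ω j := by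
  induction j with
  | zero => rfl
  | succ j ih =>
    have hsub := Rev_mono x x' ω j
    have hj : Rev x x' ω' j = Rev x x' ω j := ih (fun z hz => h z (hsub hz))
    have hcands : cands x x' ω' (Rev x x' ω' j) = cands x x' ω (Rev x x' ω j) := by
      rw [hj]; exact (cands_congr x x' (fun z hz => h z (hsub hz))).symm
    show (if _ then _ else _) = (if _ then _ else _)
    rw [hcands, hj]

def Gset (j : ℕ) : Set Config :=
  {ω | ∀ i < j, (cands x x' ω (Rev x x' ω i)).Nonempty ∧
        ∃ w ∈ pset (pick (cands x x' ω (Rev x x' ω i))), ω w = true}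

lemma Gset_congr {ω ω' : Config} (j : ℕ) (h : ∀ z ∈ Rev x x' ω j, ω' z = ω z)
    (hω : ω ∈ Gset x x' j) : ω' ∈ Gset x x' j := by
  intro i hi
  obtain ⟨hne, w, hw, hwt⟩ := hω i hi
  have hsub : Rev x x' ω i ⊆ Rev x x' ω j := Rev_mono_le x x' ω (by omega)
  have hRev : Rev x x' ω' i = Rev x x' ω i := Rev_congr x x' i (fun z hz => h z (hsub hz))
  have hcands : cands x x' ω' (Rev x x' ω' i) = cands x x' ω (Rev x x' ω i) := by
    rw [hRev]; exact (cands_congr x x' (fun z hz => h z (hsub hz))).symm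
  refine ⟨by rw [hcands]; exact hne, w, by rw [hcands]; exact hw, ?_⟩
  have hwRev : w ∈ Rev x x' ω (i+1) := by
    rw [show Rev x x' ω (i+1) = Rev x x' ω i ∪ pset (pick (cands x x' ω (Rev x x' ω i)))
      from if_pos hne]
    exact Finset.mem_union_right _ hw
  rw [h w (Rev_mono_le x x' ω (by omega : i + 1 ≤ j) hwRev)]
  exact hwt


-- ===================== measure lemmas =====================

def Cyl (R : Finset Site) (σ : Config) : Set Config := {ω | ∀ z ∈ R, ω z = σ z}

def goodQ (Q : Finset Site) : Set Config := {ω | ∃ w ∈ Q, ω w = true}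

lemma measurableSet_cyl (R : Finset Site) (σ : Config) : MeasurableSet (Cyl R σ) := by
  have : Cyl R σ = ⋂ z ∈ (R : Set Site), (fun ω : Config => ω z) ⁻¹' {σ z} := by
    ext ω; simp [Cyl]
  rw [this]
  exact MeasurableSet.biInter R.countable_toSet
    (fun z _ => measurable_pi_apply z (measurableSet_singleton (σ z)))

lemma measurableSet_goodQ (Q : Finset Site) : MeasurableSet (goodQ Q) := by
  have : goodQ Q = ⋃ w ∈ (Q : Set Site), (fun ω : Config => ω w) ⁻¹' {true} := by
    ext ω; simp [goodQ]
  rw [this]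
  exact MeasurableSet.biUnion Q.countable_toSet
    (fun w _ => measurable_pi_apply w (measurableSet_singleton true))

lemma measure_cyl_inter_goodQ {p : ℝ} (hp0 : 0 ≤ p) (hp1 : p ≤ 1)
    (μ : Measure Config) [IsProbabilityMeasure μ] (hμ : IsBernoulli p μ)
    {R Q : Finset Site} (σ : Config) (hdisj : Disjoint R Q) (hQ : Q.card = 4) :
    μ (Cyl R σ ∩ goodQ Q) = ENNReal.ofReal (1 - (1 - p) ^ 4) * μ (Cyl R σ) := by
  classical
  set σ' : Config := fun z => if z ∈ Q then false else σ z with hσ'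
  have hBdef : Cyl R σ \ goodQ Q = Cyl (R ∪ Q) σ' := by
    ext ω
    simp only [Cyl, goodQ, Set.mem_diff, Set.mem_setOf_eq, Finset.mem_union]
    constructor
    · rintro ⟨h1, h2⟩ z hz
      rcases hz with hz | hz
      · have hzQ : z ∉ Q := fun hq => (Finset.disjoint_left.mp hdisj hz) hq
        rw [hσ']; simp only [hzQ, if_false]; exact h1 z hz
      · rw [hσ']; simp only [hz, if_true]
        by_contra hne
        exact h2 ⟨z, hz, by simpa using hne⟩
    · intro h
      refine ⟨fun z hz => ?_, ?_⟩
      · have hzQ : z ∉ Q := fun hq => (Finset.disjoint_left.mp hdisj hz) hq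
        have := h z (Or.inl hz); simp only [hσ', if_neg hzQ] at this; exact this
      · rintro ⟨w, hw, hwt⟩
        have := h w (Or.inr hw); simp only [hσ', if_pos hw] at this
        rw [this] at hwt; exact Bool.false_ne_true hwt
  have hBsub : Cyl (R ∪ Q) σ' ⊆ Cyl R σ := by
    rw [← hBdef]; exact Set.diff_subset
  have hmB : μ (Cyl (R ∪ Q) σ') =
      μ (Cyl R σ) * ENNReal.ofReal ((1 - p) ^ 4) := by
    have h1 : μ (Cyl (R ∪ Q) σ') =
        ∏ z ∈ R ∪ Q, ENNReal.ofReal (if σ' z then p else 1 - p) := hμ (R ∪ Q) σ'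
    have h2 : μ (Cyl R σ) = ∏ z ∈ R, ENNReal.ofReal (if σ z then p else 1 - p) := hμ R σ
    rw [h1, h2, Finset.prod_union hdisj]
    congr 1
    · apply Finset.prod_congr rfl
      intro z hz
      have hzQ : z ∉ Q := fun hq => (Finset.disjoint_left.mp hdisj hz) hq
      rw [hσ']; simp only [hzQ, if_false]
    · have : ∀ z ∈ Q, ENNReal.ofReal (if σ' z then p else 1 - p) = ENNReal.ofReal (1 - p) := by
        intro z hz; rw [hσ']; simp only [hz, if_true, Bool.false_eq_true, if_false]
      rw [Finset.prod_congr rfl this, Finset.prod_const, hQ,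
        ← ENNReal.ofReal_pow (by linarith)]
  have hsplit : Cyl R σ ∩ goodQ Q = Cyl R σ \ Cyl (R ∪ Q) σ' := by
    rw [← hBdef]
    ext ω
    simp only [Set.mem_inter_iff, Set.mem_diff]
    tauto
  rw [hsplit,
    measure_diff hBsub (measurableSet_cyl _ _).nullMeasurableSet (measure_ne_top μ _), hmB]
  have ha : μ (Cyl R σ) ≠ ⊤ := measure_ne_top μ _
  have hc1 : ENNReal.ofReal ((1 - p) ^ 4) ≤ 1 := by
    rw [← ENNReal.ofReal_one]
    exact ENNReal.ofReal_le_ofReal (by nlinarith [pow_le_one₀ (by linarith : (0:ℝ) ≤ 1 - p) (by linarith : (1:ℝ) - p ≤ 1) (n := 4)])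
  rw [show (1 : ℝ) - (1-p)^4 = 1 - (1-p)^4 from rfl]
  rw [ENNReal.ofReal_sub _ (by positivity), ENNReal.ofReal_one]
  rw [ENNReal.sub_mul (fun _ _ => ha), one_mul, mul_comm (μ (Cyl R σ))]

-- ===================== atoms =====================

def extCfg (j : ℕ) (τ : ↑(box x j) → Bool) : Config :=
  fun z => if h : z ∈ box x j then τ ⟨z, h⟩ else false

def atoms (j : ℕ) : Finset (Finset Site × Config) :=
  ((Finset.univ : Finset (↑(box x j) → Bool)).filter
    (fun τ => extCfg x j τ ∈ Gset x x' j ∧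
      (cands x x' (extCfg x j τ) (Rev x x' (extCfg x j τ) j)).Nonempty)).image
    (fun τ => (Rev x x' (extCfg x j τ) j,
      fun z => if z ∈ Rev x x' (extCfg x j τ) j then extCfg x j τ z else false))

lemma atoms_spec {j : ℕ} {a : Finset Site × Config} (ha : a ∈ atoms x x' j) :
    (∀ z ∉ a.1, a.2 z = false) ∧ (∀ z ∈ a.1, pset z ⊆ a.1) ∧
    ∀ ω ∈ Cyl a.1 a.2,
      Rev x x' ω j = a.1 ∧ ω ∈ Gset x x' j ∧
      cands x x' ω a.1 = cands x x' a.2 a.1 ∧ (cands x x' a.2 a.1).Nonempty := by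
  obtain ⟨τ, hτ, rfl⟩ := Finset.mem_image.mp ha
  rw [Finset.mem_filter] at hτ
  obtain ⟨-, hG, hne⟩ := hτ
  refine ⟨fun z hz => by simp [hz], fun z hz => pset_subset_Rev x x' _ j hz, fun ω hω => ?_⟩
  have hagree : ∀ z ∈ Rev x x' (extCfg x j τ) j, ω z = extCfg x j τ z := by
    intro z hz
    have := hω z hz
    simpa [hz] using this
  have hagree2 : ∀ z ∈ Rev x x' (extCfg x j τ) j,
      (fun w => if w ∈ Rev x x' (extCfg x j τ) j then extCfg x j τ w else false) z
        = extCfg x j τ z := by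
    intro z hz; simp [hz]
  have hRev : Rev x x' ω j = Rev x x' (extCfg x j τ) j := Rev_congr x x' j hagree
  refine ⟨hRev, Gset_congr x x' j hagree hG, ?_, ?_⟩
  · rw [← cands_congr x x' hagree, cands_congr x x' hagree2]
  · rw [← cands_congr x x' hagree2]; exact hne

lemma atoms_cover (hxx' : adj x x') {j : ℕ} {ω : Config} (hG : ω ∈ Gset x x' j)
    (hne : (cands x x' ω (Rev x x' ω j)).Nonempty) :
    ∃ a ∈ atoms x x' j, ω ∈ Cyl a.1 a.2 := by
  set τ : ↑(box x j) → Bool := fun z => ω ↑z with hτdef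
  have hagree : ∀ z ∈ Rev x x' ω j, extCfg x j τ z = ω z := by
    intro z hz
    have hzb : z ∈ box x j := Rev_subset_box x x' hxx' ω j hz
    simp [extCfg, hzb, hτdef]
  have hRev : Rev x x' (extCfg x j τ) j = Rev x x' ω j := Rev_congr x x' j hagree
  have hGτ : extCfg x j τ ∈ Gset x x' j := Gset_congr x x' j hagree hG
  have hneτ : (cands x x' (extCfg x j τ) (Rev x x' (extCfg x j τ) j)).Nonempty := by
    rw [hRev, ← cands_congr x x' hagree]; exact hne
  refine ⟨(Rev x x' ω j, fun z => if z ∈ Rev x x' ω j then extCfg x j τ z else false), ?_, ?_⟩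
  · apply Finset.mem_image.mpr
    refine ⟨τ, Finset.mem_filter.mpr ⟨Finset.mem_univ _, hGτ, hneτ⟩, ?_⟩
    rw [hRev]
  · intro z hz
    simp only [hz, if_true]
    exact (hagree z hz).symm

lemma atoms_disjoint {j : ℕ} {a b : Finset Site × Config}
    (ha : a ∈ atoms x x' j) (hb : b ∈ atoms x x' j) (hab : a ≠ b) :
    Disjoint (Cyl a.1 a.2) (Cyl b.1 b.2) := by
  rw [Set.disjoint_left]
  intro ω hωa hωb
  apply hab
  have sa := atoms_spec x x' ha
  have sb := atoms_spec x x' hb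
  have h1 : a.1 = b.1 := by rw [← (sa.2.2 ω hωa).1, ← (sb.2.2 ω hωb).1]
  have h2 : a.2 = b.2 := by
    funext z
    by_cases hz : z ∈ a.1
    · rw [← hωa z hz, ← hωb z (h1 ▸ hz)]
    · rw [sa.1 z hz, sb.1 z (h1 ▸ hz)]
  exact Prod.ext h1 h2

/-- the plaquette revealed at the step determined by an atom -/
def trigQ (a : Finset Site × Config) : Finset Site := pset (pick (cands x x' a.2 a.1))

lemma Gset_succ_eq (hxx' : adj x x') (j : ℕ) :
    Gset x x' (j + 1) = ⋃ a ∈ atoms x x' j, (Cyl a.1 a.2 ∩ goodQ (trigQ x x' a)) := by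
  ext ω
  simp only [Set.mem_iUnion, exists_prop]
  constructor
  · intro hω
    have hG : ω ∈ Gset x x' j := fun i hi => hω i (by omega)
    obtain ⟨hne, w, hw, hwt⟩ := hω j (by omega)
    obtain ⟨a, ha, hωa⟩ := atoms_cover x x' hxx' hG hne
    have sa := atoms_spec x x' ha
    obtain ⟨hRev, -, hcands, -⟩ := sa.2.2 ω hωa
    refine ⟨a, ha, hωa, w, ?_, hwt⟩
    rw [trigQ, ← hcands, ← hRev]
    exact hw
  · rintro ⟨a, ha, hωa, w, hw, hwt⟩
    have sa := atoms_spec x x' ha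
    obtain ⟨hRev, hG, hcands, hne⟩ := sa.2.2 ω hωa
    intro i hi
    rcases Nat.lt_succ_iff_lt_or_eq.mp hi with hi' | rfl
    · exact hG i hi'
    · refine ⟨by rw [hRev, hcands]; exact hne, w, ?_, hwt⟩
      rw [hRev, hcands]
      exact hw

lemma trigQ_disjoint {j : ℕ} {a : Finset Site × Config} (ha : a ∈ atoms x x' j) :
    Disjoint a.1 (trigQ x x' a) := by
  have sa := atoms_spec x x' ha
  have hne : (cands x x' a.2 a.1).Nonempty := by
    obtain ⟨τ, hτ, rfl⟩ := Finset.mem_image.mp ha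
    rw [Finset.mem_filter] at hτ
    obtain ⟨-, hG, hne⟩ := hτ
    have hagree2 : ∀ z ∈ Rev x x' (extCfg x j τ) j,
        (fun w => if w ∈ Rev x x' (extCfg x j τ) j then extCfg x j τ w else false) z
          = extCfg x j τ z := by
      intro z hz; simp [hz]
    rw [← cands_congr x x' hagree2]; exact hne
  have htmem := pick_mem hne
  rw [cands, Finset.mem_filter] at htmem
  obtain ⟨-, htR, -⟩ := htmem
  rw [Finset.disjoint_right]
  intro w hwQ hwR
  apply htR
  have := sa.2.1 w hwR
  rw [pset_eq_of_mem hwQ] at this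
  exact this (mem_pset_self _)

-- ===================== measure of the good events =====================

lemma Gset_zero : Gset x x' 0 = Set.univ := by
  ext ω; simp [Gset]

lemma measure_Gset_succ {p : ℝ} (hp0 : 0 ≤ p) (hp1 : p ≤ 1)
    (μ : Measure Config) [IsProbabilityMeasure μ] (hμ : IsBernoulli p μ)
    (hxx' : adj x x') (j : ℕ) :
    μ (Gset x x' (j + 1)) ≤ ENNReal.ofReal (1 - (1 - p) ^ 4) * μ (Gset x x' j) := by
  rw [Gset_succ_eq x x' hxx' j]
  have hd1 : ((atoms x x' j : Set (Finset Site × Config))).PairwiseDisjoint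
      (fun a => Cyl a.1 a.2 ∩ goodQ (trigQ x x' a)) := by
    intro a ha b hb hab
    exact (atoms_disjoint x x' ha hb hab).mono Set.inter_subset_left Set.inter_subset_left
  have hd2 : ((atoms x x' j : Set (Finset Site × Config))).PairwiseDisjoint
      (fun a => Cyl a.1 a.2) := by
    intro a ha b hb hab
    exact atoms_disjoint x x' ha hb hab
  rw [measure_biUnion_finset hd1 (fun a _ =>
    ((measurableSet_cyl a.1 a.2).inter (measurableSet_goodQ _)))]
  have hterm : ∀ a ∈ atoms x x' j,
      μ (Cyl a.1 a.2 ∩ goodQ (trigQ x x' a)) =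
        ENNReal.ofReal (1 - (1 - p) ^ 4) * μ (Cyl a.1 a.2) := by
    intro a ha
    exact measure_cyl_inter_goodQ hp0 hp1 μ hμ a.2 (trigQ_disjoint x x' ha) (card_pset _)
  rw [Finset.sum_congr rfl hterm, ← Finset.mul_sum]
  apply mul_le_mul_right
  rw [← measure_biUnion_finset hd2 (fun a _ => measurableSet_cyl a.1 a.2)]
  apply measure_mono
  intro ω hω
  simp only [Set.mem_iUnion, exists_prop] at hω
  obtain ⟨a, ha, hωa⟩ := hω
  exact ((atoms_spec x x' ha).2.2 ω hωa).2.1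

lemma measure_Gset_le {p : ℝ} (hp0 : 0 ≤ p) (hp1 : p ≤ 1)
    (μ : Measure Config) [IsProbabilityMeasure μ] (hμ : IsBernoulli p μ)
    (hxx' : adj x x') (j : ℕ) :
    μ (Gset x x' j) ≤ ENNReal.ofReal (1 - (1 - p) ^ 4) ^ j := by
  induction j with
  | zero => rw [Gset_zero, pow_zero]; exact le_of_eq (measure_univ)
  | succ j ih =>
    calc μ (Gset x x' (j + 1)) ≤ ENNReal.ofReal (1 - (1 - p) ^ 4) * μ (Gset x x' j) :=
          measure_Gset_succ x x' hp0 hp1 μ hμ hxx' j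
    _ ≤ ENNReal.ofReal (1 - (1 - p) ^ 4) * ENNReal.ofReal (1 - (1 - p) ^ 4) ^ j :=
          mul_le_mul_right ih _
    _ = ENNReal.ofReal (1 - (1 - p) ^ 4) ^ (j + 1) := by rw [pow_succ, mul_comm]; ring

-- ===================== the cluster event is contained in the good event =====================

lemma VPath.restrict {ω : Config} {x x' : Site} {k : ℕ} {π : Fin (k+1) → Site} {S : Set Site}
    (h : VPath ω x x' Set.univ k π) (hmem : ∀ i, π i ∈ S) : VPath ω x x' S k π :=
  ⟨h.1, h.2.1, h.2.2.1, h.2.2.2.1, h.2.2.2.2.1, hmem⟩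

lemma cands_nonempty_of_exit {ω : Config} {x x' : Site} {R : Finset Site} (hx'R : x' ∈ R) :
    ∀ k : ℕ, ∀ π : Fin (k + 1) → Site, VPath ω x x' Set.univ k π →
      π (Fin.last k) ∉ R → (cands x x' ω R).Nonempty := by
  intro k
  induction k using Nat.strong_induction_on with
  | _ k IH =>
  intro π hπ hlast
  match k with
  | 0 =>
    exact absurd (hπ.1 ▸ hx'R) (by simpa [Fin.last] using hlast)
  | (m + 1) =>
    by_cases hall : ∀ i : Fin (m + 1), π i.castSucc ∈ R
    · -- the whole path except its last site lies in R
      have htr := hπ.trunc (show m ≤ m + 1 by omega)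
      have hcast : ∀ i : Fin (m + 1), (Fin.castLE (show m + 1 ≤ m + 2 by omega) i) =
          i.castSucc := fun i => Fin.ext rfl
      have hmem : ∀ i : Fin (m + 1), (π ∘ Fin.castLE (show m + 1 ≤ m + 2 by omega)) i ∈
          (R : Set Site) := by
        intro i
        simp only [Function.comp_apply, hcast i]
        exact hall i
      have hreach : locReach ω x x' ↑R (π ((Fin.last m).castSucc)) := by
        refine ⟨m, _, htr.restrict hmem, ?_⟩
        simp only [Function.comp_apply, hcast (Fin.last m)]
      have hadj : adj (π ((Fin.last m).castSucc)) (π (Fin.last (m + 1))) := by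
        have := hπ.2.2.1 (Fin.last m)
        rwa [Fin.succ_last] at this
      refine ⟨π (Fin.last (m + 1)), ?_⟩
      rw [cands, Finset.mem_filter]
      refine ⟨Finset.mem_biUnion.mpr ⟨π ((Fin.last m).castSucc), hall (Fin.last m), ?_⟩,
        hlast, π ((Fin.last m).castSucc), hall (Fin.last m), hadj, hreach⟩
      rw [mem_nbrs_iff]
      exact hadj
    · push_neg at hall
      obtain ⟨i, hi⟩ := hall
      have htr := hπ.trunc (show (i : ℕ) ≤ m + 1 by omega)
      have hlast' : (π ∘ Fin.castLE (show (i:ℕ) + 1 ≤ m + 2 by omega)) (Fin.last i) ∉ R := by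
        have : (Fin.castLE (show (i:ℕ) + 1 ≤ m + 2 by omega) (Fin.last i)) = i.castSucc :=
          Fin.ext (by simp)
        simp only [Function.comp_apply, this]
        exact hi
      exact IH i (by omega) _ htr hlast'

lemma mem_cands_iff {ω : Config} {R : Finset Site} {z : Site} :
    z ∈ cands x x' ω R ↔ z ∉ R ∧ ∃ y ∈ R, adj y z ∧ locReach ω x x' ↑R y := by
  rw [cands, Finset.mem_filter]
  constructor
  · exact fun h => h.2
  · rintro ⟨h1, y, hy, h2, h3⟩
    exact ⟨Finset.mem_biUnion.mpr ⟨y, hy, (mem_nbrs_iff y z).mpr h2⟩, h1, y, hy, h2, h3⟩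

lemma E_subset_Gset (x x' : Site) (hxx' : adj x x') (n : ℕ) (j : ℕ)
    (hj : ∀ i, i < j → 8 + 4 * i < n) :
    {ω : Config | ω x' = false ∧
        (∃ s : Finset Site, ↑s ⊆ partialCluster ω x x' ∧ n ≤ s.card) ∧
        ∀ y ∈ partialCluster ω x x', ¬ IsProtected ω y} ⊆ Gset x x' j := by
  rintro ω ⟨hx', ⟨s, hs, hcard⟩, hnp⟩
  intro i hi
  -- a cluster site outside the revealed region
  have hbig : ∃ y ∈ s, y ∉ Rev x x' ω i := by
    by_contra hcon
    push_neg at hcon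
    have : s ⊆ Rev x x' ω i := fun y hy => hcon y hy
    have := Finset.card_le_card this
    have := card_Rev x x' ω i
    have := hj i hi
    omega
  obtain ⟨y, hys, hyR⟩ := hbig
  obtain ⟨k, π, hπ, hπlast⟩ := mem_partialCluster_locReach hx' (hs hys)
  have hx'R : x' ∈ Rev x x' ω i := by
    have : x' ∈ Rev x x' ω 0 := Finset.mem_union_right _ (mem_pset_self x')
    exact Rev_mono_le x x' ω (Nat.zero_le i) this
  have hne : (cands x x' ω (Rev x x' ω i)).Nonempty :=
    cands_nonempty_of_exit hx'R k π hπ (hπlast ▸ hyR)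
  refine ⟨hne, ?_⟩
  -- goodness of the newly revealed plaquette
  by_contra hbad
  push_neg at hbad
  have hclosed : ∀ w ∈ pset (pick (cands x x' ω (Rev x x' ω i))), ω w = false := by
    intro w hw
    have := hbad w hw
    exact Bool.not_eq_true (ω w) ▸ (by simpa using this)
  set t := pick (cands x x' ω (Rev x x' ω i)) with htdef
  have htc := pick_mem hne
  rw [← htdef, mem_cands_iff x x'] at htc
  obtain ⟨htR, z, hzR, hadjzt, hreach⟩ := htc
  have htx : t ≠ x := by
    intro h
    apply htR
    rw [h]
    exact Rev_mono_le x x' ω (Nat.zero_le i)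
      (Finset.mem_union_left _ (mem_pset_self x))
  have htclosed : ω t = false := hclosed t (mem_pset_self t)
  -- t is in the partial cluster
  obtain ⟨k', π', hπ', hπ'last⟩ := hreach
  have hsnoc := hπ'.snoc (z := t) (hπ'last ▸ hadjzt) (by simpa using htR) htclosed htx
  have htC : t ∈ partialCluster ω x x' := by
    apply locReach_mem_partialCluster hx'
    exact ⟨k' + 1, Fin.snoc π' t, hsnoc.mono (Set.subset_univ _), by simp⟩
  apply hnp t htC
  exact ⟨htclosed, blockCorner t, mem_pset_self t, hclosed⟩

end PC

/-- For `p ∈ (0,1)` there are `α > 0` and `K < ∞` such that for any ordered pair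
`(x,x')` of nearest neighbours, the probability that the partial cluster
`C_{(x,x')}` (a closed cluster) has at least `n` sites and contains no protected
site is at most `K exp(-α n)`; in fact one may take the bound
`K [1-(1-p)⁴]^{n/4}`. -/
theorem partial_cluster_no_protected_exp_decay (p : ℝ) (hp : p ∈ Set.Ioo (0 : ℝ) 1)
    (μ : Measure Config) [IsProbabilityMeasure μ] (hμ : IsBernoulli p μ) :
    ∃ (α K : ℝ), 0 < α ∧ 0 < K ∧
      ∀ (x x' : Site), adj x x' → ∀ n : ℕ,
        μ {ω : Config | ω x' = false ∧
            (∃ s : Finset Site, ↑s ⊆ partialCluster ω x x' ∧ n ≤ s.card) ∧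
            ∀ y ∈ partialCluster ω x x', ¬ IsProtected ω y}
          ≤ min (ENNReal.ofReal (K * Real.exp (-α * n)))
              (ENNReal.ofReal (K * (1 - (1 - p) ^ 4) ^ ((n : ℝ) / 4))) := by
  obtain ⟨hp0, hp1⟩ := hp
  set q : ℝ := 1 - (1 - p) ^ 4 with hqdef
  have hq0 : 0 < q := by
    have : (1 - p) ^ 4 < 1 := pow_lt_one₀ (by linarith) (by linarith) (by norm_num)
    rw [hqdef]; linarith
  have hq1 : q < 1 := by
    have : 0 < (1 - p) ^ 4 := pow_pos (by linarith) 4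
    rw [hqdef]; linarith
  have hlog : Real.log q < 0 := Real.log_neg hq0 hq1
  refine ⟨-(Real.log q) / 4, q ^ (-3 : ℝ), by linarith, Real.rpow_pos_of_pos hq0 _, ?_⟩
  intro x x' hxx' n
  set j := n / 4 - 2 with hjdef
  have hj : ∀ i, i < j → 8 + 4 * i < n := by intro i hi; omega
  have hEG := E_subset_Gset x x' hxx' n j hj
  have h2 : μ {ω : Config | ω x' = false ∧
      (∃ s : Finset Site, ↑s ⊆ partialCluster ω x x' ∧ n ≤ s.card) ∧
      ∀ y ∈ partialCluster ω x x', ¬ IsProtected ω y} ≤ ENNReal.ofReal q ^ j :=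
    (measure_mono hEG).trans (measure_Gset_le x x' (le_of_lt hp0) (le_of_lt hp1) μ hμ hxx' j)
  have hreal : q ^ j ≤ q ^ (-3 : ℝ) * q ^ ((n : ℝ) / 4) := by
    rw [← Real.rpow_natCast q j, ← Real.rpow_add hq0]
    apply Real.rpow_le_rpow_of_exponent_ge hq0 (le_of_lt hq1)
    have h4j : (n : ℝ) ≤ 4 * (j : ℝ) + 12 := by
      have : n ≤ 4 * j + 12 := by omega
      exact_mod_cast this
    linarith
  have hmain : μ {ω : Config | ω x' = false ∧
      (∃ s : Finset Site, ↑s ⊆ partialCluster ω x x' ∧ n ≤ s.card) ∧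
      ∀ y ∈ partialCluster ω x x', ¬ IsProtected ω y} ≤
        ENNReal.ofReal (q ^ (-3 : ℝ) * q ^ ((n : ℝ) / 4)) :=
    calc μ _ ≤ ENNReal.ofReal q ^ j := h2
    _ = ENNReal.ofReal (q ^ j) := (ENNReal.ofReal_pow (le_of_lt hq0) j).symm
    _ ≤ _ := ENNReal.ofReal_le_ofReal hreal
  have hexp : q ^ (-3 : ℝ) * Real.exp (-(-(Real.log q) / 4) * (n : ℕ)) =
      q ^ (-3 : ℝ) * q ^ ((n : ℝ) / 4) := by
    rw [Real.rpow_def_of_pos hq0 ((n : ℝ) / 4)]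
    congr 1
    congr 1
    ring
  exact le_min (by rw [hexp]; exact hmain) hmain
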